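/- arXiv:2602.18575 — 3 statements merged into one kernel-verified Lean document; each statement's English description precedes it below -/
import Mathlib

section
/- Fix an integer k ≥ 1 and let F_k(s) = Σ_{j=1}^∞ ln(1/(1 − e^{j^k s})) for s < 0 be the fulcrum of P_k. For every integer m ≥ 0, the m-th derivative satisfies lim_{s↓0} s^{m+1/k} F_k^{(m)}(−s) = (1/k) ζ(1+1/k) Γ(m+1/k). -/
open Filter Topology
open Real Set MeasureTheory

/-- basic bound: `x^M e^{-tx} ≤ M!/t^M` for `t>0, x≥0`. -/
lemma pow_mul_exp_neg_le (M : ℕ) {t x : ℝ} (ht : 0 < t) (hx : 0 ≤ x) :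
    x ^ M * Real.exp (-(t * x)) ≤ M.factorial / t ^ M := by
  have h1 : (t * x) ^ M / M.factorial ≤ Real.exp (t * x) := by
    calc (t * x) ^ M / M.factorial ≤ ∑ i ∈ Finset.range (M + 1), (t * x) ^ i / i.factorial := by
          exact Finset.single_le_sum (f := fun i => (t*x)^i / i.factorial)
            (fun i _ => by positivity) (Finset.self_mem_range_succ M)
      _ ≤ Real.exp (t * x) := by
          simpa using Real.sum_le_exp_of_nonneg (by positivity) (M+1)
  have hM : (0:ℝ) < M.factorial := by exact_mod_cast M.factorial_pos
  have h2 : x ^ M ≤ M.factorial / t ^ M * Real.exp (t * x) := by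
    rw [mul_pow] at h1
    rw [div_le_iff₀ hM] at h1
    rw [div_mul_eq_mul_div, le_div_iff₀ (by positivity)]
    nlinarith [Real.exp_pos (t*x), pow_pos ht M]
  calc x ^ M * Real.exp (-(t * x)) ≤ (M.factorial / t ^ M * Real.exp (t * x)) * Real.exp (-(t*x)) := by
        exact mul_le_mul_of_nonneg_right h2 (Real.exp_pos _).le
    _ = M.factorial / t ^ M := by rw [mul_assoc, ← Real.exp_add]; simp

lemma summable_exp_geom {r : ℝ} (hr : r < 0) : Summable (fun j : ℕ => Real.exp ((j+1) * r)) := by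
  have : ∀ j : ℕ, Real.exp ((j+1) * r) = Real.exp r * Real.exp r ^ j := by
    intro j
    rw [← Real.exp_nat_mul]
    rw [← Real.exp_add]
    ring_nf
  simp_rw [this]
  exact (summable_geometric_of_lt_one (Real.exp_pos r).le
    (Real.exp_lt_one_iff.mpr hr)).mul_left _

/-- Summability of `j ↦ (j+1)^M e^{-(j+1)^k t}` for `t > 0`. -/
lemma summable_inner (k M : ℕ) (hk : 1 ≤ k) {t : ℝ} (ht : 0 < t) :
    Summable (fun j : ℕ => ((j : ℝ)+1) ^ M * Real.exp (-(((j : ℝ)+1) ^ k * t))) := by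
  refine Summable.of_nonneg_of_le (fun j => by positivity)
    (fun j => ?_) (((summable_exp_geom (r := -(t/2)) (by linarith)).mul_left
      (M.factorial / (t/2) ^ M)))
  have hx : (1:ℝ) ≤ (j:ℝ)+1 := by linarith [Nat.cast_nonneg (α := ℝ) j]
  have hxx : ((j:ℝ)+1) ≤ ((j:ℝ)+1)^k := le_self_pow₀ (by linarith) (by omega)
  calc ((j : ℝ)+1) ^ M * Real.exp (-(((j : ℝ)+1) ^ k * t))
      ≤ ((j : ℝ)+1) ^ M * Real.exp (-(((j : ℝ)+1) * t)) := by
        apply mul_le_mul_of_nonneg_left _ (by positivity)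
        apply Real.exp_le_exp.mpr
        nlinarith
    _ = (((j : ℝ)+1) ^ M * Real.exp (-(t/2 * ((j:ℝ)+1)))) * Real.exp (((j:ℝ)+1) * -(t/2)) := by
        rw [mul_assoc, ← Real.exp_add]; ring_nf
    _ ≤ (M.factorial / (t/2) ^ M) * Real.exp (((j:ℝ)+1) * -(t/2)) := by
        apply mul_le_mul_of_nonneg_right _ (Real.exp_pos _).le
        exact pow_mul_exp_neg_le M (by linarith) (by positivity)



/-- `x^M e^{-xc} ≤ C(M,c) e^{-xc/2}` for `c>0, x≥0`. -/
lemma pow_mul_exp_bd (M : ℕ) {x c : ℝ} (hc : 0 < c) (hx : 0 ≤ x) :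
    x ^ M * Real.exp (x * (-c)) ≤ M.factorial / (c/2) ^ M * Real.exp (x * (-(c/2))) := by
  have h1 : Real.exp (x * (-c)) = Real.exp (-((c/2) * x)) * Real.exp (x * (-(c/2))) := by
    rw [← Real.exp_add]; congr 1; ring
  calc x ^ M * Real.exp (x * (-c))
      = (x ^ M * Real.exp (-((c/2) * x))) * Real.exp (x * (-(c/2))) := by rw [h1]; ring
    _ ≤ M.factorial / (c/2) ^ M * Real.exp (x * (-(c/2))) :=
      mul_le_mul_of_nonneg_right (pow_mul_exp_neg_le M (by linarith) hx) (Real.exp_pos _).le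

/-- Summability of the double-indexed family. -/
lemma summable_prod (k M : ℕ) (hk : 1 ≤ k) {t : ℝ} (ht : t < 0) :
    Summable (fun p : ℕ×ℕ =>
      (((p.2 : ℝ)+1) * ((p.1 : ℝ)+1)^k)^M *
        Real.exp ((((p.2 : ℝ)+1) * ((p.1 : ℝ)+1)^k) * t)) := by
  obtain ⟨c, hc, rfl⟩ : ∃ c, 0 < c ∧ t = -c := ⟨-t, by linarith, by ring⟩
  have hf : Summable (fun j : ℕ => Real.exp ((j+1) * (-(c/4)))) :=
    summable_exp_geom (by linarith)
  have hg : Summable (fun n : ℕ =>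
      (M.factorial / (c/2) ^ M) * Real.exp ((n+1) * (-(c/4)))) :=
    (summable_exp_geom (by linarith)).mul_left _
  have hsum := hf.mul_of_nonneg hg (fun j => (Real.exp_pos _).le)
    (fun n => by positivity)
  refine Summable.of_nonneg_of_le (fun p => by positivity) (fun p => ?_) hsum
  obtain ⟨j, n⟩ := p
  simp only
  have key : ∀ x : ℝ, ((n:ℝ)+1+((j:ℝ)+1))/2 ≤ x → 0 ≤ x → x ^ M * Real.exp (x * (-c)) ≤
      (Real.exp ((j+1) * (-(c/4)))) * ((M.factorial / (c/2) ^ M) * Real.exp ((n+1) * (-(c/4)))) := by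
    intro x hxge hx0
    refine (pow_mul_exp_bd M hc hx0).trans ?_
    have h2 : Real.exp (x * (-(c/2))) ≤ Real.exp ((((n:ℝ)+1+((j:ℝ)+1))/2) * (-(c/2))) := by
      apply Real.exp_le_exp.mpr; nlinarith
    calc M.factorial / (c/2) ^ M * Real.exp (x * (-(c/2)))
        ≤ M.factorial / (c/2) ^ M * Real.exp ((((n:ℝ)+1+((j:ℝ)+1))/2) * (-(c/2))) := by
          apply mul_le_mul_of_nonneg_left h2 (by positivity)
      _ = (Real.exp ((j+1) * (-(c/4)))) * ((M.factorial / (c/2) ^ M) * Real.exp ((n+1) * (-(c/4)))) := by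
          have : Real.exp ((((n:ℝ)+1+((j:ℝ)+1))/2) * (-(c/2)))
              = Real.exp ((j+1) * (-(c/4))) * Real.exp ((n+1) * (-(c/4))) := by
            rw [← Real.exp_add]; congr 1; ring
          rw [this]; ring
  have hj1 : (1:ℝ) ≤ (j:ℝ)+1 := by linarith [Nat.cast_nonneg (α := ℝ) j]
  have hn1 : (1:ℝ) ≤ (n:ℝ)+1 := by linarith [Nat.cast_nonneg (α := ℝ) n]
  have hjk : ((j:ℝ)+1) ≤ ((j:ℝ)+1)^k := le_self_pow₀ (by linarith) (by omega)
  refine key _ ?_ (by positivity)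
  nlinarith [mul_le_mul_of_nonneg_left hjk (by positivity : (0:ℝ) ≤ (n:ℝ)+1)]

noncomputable def gf (k m : ℕ) : ℝ → ℝ := fun x => x ^ (k*m) * Real.exp (-(x^k))

noncomputable def Db (m : ℕ) : ℝ → ℝ :=
  fun x => (m.factorial * 2^m * Real.exp (1/2)) * Real.exp (-((1/2)*x))

lemma gf_nonneg (k m : ℕ) {x : ℝ} (hx : 0 ≤ x) : 0 ≤ gf k m x := by
  unfold gf; positivity

lemma gf_cont (k m : ℕ) : Continuous (gf k m) := by
  unfold gf; fun_prop

lemma gf_le_D (k m : ℕ) (hk : 1 ≤ k) {x y : ℝ} (hx : 0 ≤ x) (hxy : x ≤ y) :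
    gf k m y ≤ Db m x := by
  have hy : 0 ≤ y := hx.trans hxy
  have hz : 0 ≤ y^k := by positivity
  have h1 : gf k m y = (y^k)^m * Real.exp (-(y^k)) := by
    unfold gf; rw [← pow_mul]
  have h2 : (y^k)^m * Real.exp (-(y^k))
      = ((y^k)^m * Real.exp (-((1/2) * (y^k)))) * Real.exp (-((1/2)*(y^k))) := by
    rw [mul_assoc, ← Real.exp_add]; congr 1; ring
  have h3 : (y^k)^m * Real.exp (-((1/2) * (y^k))) ≤ m.factorial / (1/2)^m :=
    pow_mul_exp_neg_le m (by norm_num) hz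
  have h4 : (m.factorial : ℝ) / (1/2)^m = m.factorial * 2^m := by
    rw [div_eq_mul_inv]; congr 1
    rw [← inv_pow]; norm_num
  have hxk : x - 1 ≤ y^k := by
    rcases le_or_gt 1 x with h | h
    · have : x ≤ x^k := le_self_pow₀ h (by omega)
      have hxy' : x^k ≤ y^k := pow_le_pow_left₀ hx hxy k
      linarith
    · have : (0:ℝ) ≤ y^k := hz
      linarith
  have h5 : Real.exp (-((1/2)*(y^k))) ≤ Real.exp (1/2) * Real.exp (-((1/2)*x)) := by
    rw [← Real.exp_add]
    apply Real.exp_le_exp.mpr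
    linarith
  calc gf k m y = ((y^k)^m * Real.exp (-((1/2) * (y^k)))) * Real.exp (-((1/2)*(y^k))) := by
        rw [h1, h2]
    _ ≤ (m.factorial / (1/2)^m) * (Real.exp (1/2) * Real.exp (-((1/2)*x))) := by
        apply mul_le_mul h3 h5 (Real.exp_pos _).le (by positivity)
    _ = Db m x := by rw [h4]; unfold Db; ring

lemma D_integrable (m : ℕ) : IntegrableOn (Db m) (Ioi (0:ℝ)) := by
  unfold Db
  simp_rw [show ∀ x:ℝ, -((1/2:ℝ)*x) = -(1/2)*x from fun x => by ring]
  exact (exp_neg_integrableOn_Ioi 0 (by norm_num : (0:ℝ) < 1/2)).const_mul _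

lemma gf_integral (k m : ℕ) (hk : 1 ≤ k) :
    ∫ x in Ioi (0:ℝ), gf k m x = (1/(k:ℝ)) * Real.Gamma (m + 1/k) := by
  have hk0 : (0:ℝ) < k := by exact_mod_cast hk
  have h1 : ∫ x in Ioi (0:ℝ), gf k m x
      = ∫ x in Ioi (0:ℝ), x ^ ((k*m : ℕ):ℝ) * Real.exp (-(x ^ ((k:ℕ):ℝ))) := by
    refine setIntegral_congr_fun measurableSet_Ioi (fun x hx => ?_)
    rw [Real.rpow_natCast, Real.rpow_natCast]
    rfl
  rw [h1]
  have h2 : (-1:ℝ) < ((k*m:ℕ):ℝ) := lt_of_lt_of_le (by norm_num) (Nat.cast_nonneg _)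
  rw [integral_rpow_mul_exp_neg_rpow hk0 h2]
  congr 1
  have hkne : (k:ℝ) ≠ 0 := ne_of_gt hk0
  push_cast
  field_simp

lemma gf_integrableOn (k m : ℕ) (hk : 1 ≤ k) : IntegrableOn (gf k m) (Ioi (0:ℝ)) := by
  refine (integrableOn_rpow_mul_exp_neg_rpow (p := (k:ℝ)) (s := ((k*m:ℕ):ℝ))
    (lt_of_lt_of_le (by norm_num) (Nat.cast_nonneg _))
    (by exact_mod_cast hk)).congr_fun (fun x hx => ?_) measurableSet_Ioi
  beta_reduce
  rw [Real.rpow_natCast, Real.rpow_natCast]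
  rfl

lemma step_meas (k m : ℕ) (u : ℝ) :
    Measurable (fun x : ℝ => gf k m ((⌈x/u⌉₊ : ℝ) * u)) := by
  have h1 : Measurable fun x : ℝ => ⌈x/u⌉₊ := (measurable_id.div_const u).nat_ceil
  have h2 : Measurable fun x : ℝ => ((⌈x/u⌉₊ : ℝ) * u) :=
    Measurable.comp (g := fun n : ℕ => (n:ℝ)*u) measurable_from_nat h1
  exact (gf_cont k m).measurable.comp h2

lemma step_union (u : ℝ) (hu : 0 < u) :
    Ioi (0:ℝ) = ⋃ j : ℕ, Ioc ((j:ℝ)*u) (((j:ℝ)+1)*u) := by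
  ext x
  simp only [mem_Ioi, mem_iUnion, mem_Ioc]
  constructor
  · intro hx
    have hdiv : 0 < x / u := div_pos hx hu
    have hn : 1 ≤ ⌈x/u⌉₊ := Nat.one_le_iff_ne_zero.mpr (by
      simpa [Nat.ceil_pos] using (Nat.ceil_pos.mpr hdiv).ne')
    refine ⟨⌈x/u⌉₊ - 1, ?_, ?_⟩
    · have h1 : ((⌈x/u⌉₊ : ℝ)) < x/u + 1 := Nat.ceil_lt_add_one hdiv.le
      have hc : ((⌈x/u⌉₊ - 1 : ℕ) : ℝ) = (⌈x/u⌉₊ : ℝ) - 1 := by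
        push_cast [Nat.cast_sub hn]; ring
      rw [hc]
      have h2 : (⌈x/u⌉₊ : ℝ) - 1 < x/u := by linarith
      have := (lt_div_iff₀ hu).mp h2
      linarith
    · have h2 : x/u ≤ (⌈x/u⌉₊ : ℝ) := Nat.le_ceil _
      have hc : ((⌈x/u⌉₊ - 1 : ℕ) : ℝ) + 1 = (⌈x/u⌉₊ : ℝ) := by
        push_cast [Nat.cast_sub hn]; ring
      rw [hc]
      exact (div_le_iff₀ hu).mp h2
  · rintro ⟨j, hj1, _⟩
    have : (0:ℝ) ≤ (j:ℝ)*u := by positivity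
    linarith

lemma step_integrable (k m : ℕ) (hk : 1 ≤ k) {u : ℝ} (hu : 0 < u) :
    IntegrableOn (fun x : ℝ => gf k m ((⌈x/u⌉₊ : ℝ) * u)) (Ioi (0:ℝ)) := by
  refine Integrable.mono' (D_integrable m) ((step_meas k m u).aestronglyMeasurable) ?_
  refine (ae_restrict_iff' measurableSet_Ioi).mpr (ae_of_all _ (fun x hx => ?_))
  have hx : (0:ℝ) < x := hx
  have hxc : x ≤ (⌈x/u⌉₊ : ℝ) * u := by
    have := Nat.le_ceil (x/u)
    calc x = (x/u)*u := by field_simp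
      _ ≤ (⌈x/u⌉₊ : ℝ) * u := mul_le_mul_of_nonneg_right this hu.le
  rw [Real.norm_of_nonneg (gf_nonneg k m (le_trans hx.le hxc))]
  exact gf_le_D k m hk hx.le hxc

lemma step_eq (k m : ℕ) (hk : 1 ≤ k) {u : ℝ} (hu : 0 < u) :
    ∫ x in Ioi (0:ℝ), gf k m ((⌈x/u⌉₊ : ℝ) * u)
      = u * ∑' j : ℕ, gf k m (((j:ℝ)+1) * u) := by
  have hmeasI : ∀ j : ℕ, MeasurableSet (Ioc ((j:ℝ)*u) (((j:ℝ)+1)*u)) :=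
    fun j => measurableSet_Ioc
  have hdisj : Pairwise (Function.onFun Disjoint
      (fun j : ℕ => Ioc ((j:ℝ)*u) (((j:ℝ)+1)*u))) := by
    intro i j hij
    rw [Function.onFun, Set.Ioc_disjoint_Ioc]
    rcases lt_or_gt_of_ne hij with h | h
    · have : ((i:ℝ)+1) ≤ (j:ℝ) := by exact_mod_cast h
      calc min (((i:ℝ)+1)*u) (((j:ℝ)+1)*u) ≤ ((i:ℝ)+1)*u := min_le_left _ _
        _ ≤ (j:ℝ)*u := mul_le_mul_of_nonneg_right this hu.le
        _ ≤ max ((i:ℝ)*u) ((j:ℝ)*u) := le_max_right _ _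
    · have : ((j:ℝ)+1) ≤ (i:ℝ) := by exact_mod_cast h
      calc min (((i:ℝ)+1)*u) (((j:ℝ)+1)*u) ≤ ((j:ℝ)+1)*u := min_le_right _ _
        _ ≤ (i:ℝ)*u := mul_le_mul_of_nonneg_right this hu.le
        _ ≤ max ((i:ℝ)*u) ((j:ℝ)*u) := le_max_left _ _
  have hint : IntegrableOn (fun x : ℝ => gf k m ((⌈x/u⌉₊ : ℝ) * u))
      (⋃ j : ℕ, Ioc ((j:ℝ)*u) (((j:ℝ)+1)*u)) := by
    rw [← step_union u hu]; exact step_integrable k m hk hu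
  rw [step_union u hu, MeasureTheory.integral_iUnion hmeasI hdisj hint]
  have hterm : ∀ j : ℕ, ∫ x in Ioc ((j:ℝ)*u) (((j:ℝ)+1)*u), gf k m ((⌈x/u⌉₊ : ℝ) * u)
      = u * gf k m (((j:ℝ)+1) * u) := by
    intro j
    have hconst : ∀ x ∈ Ioc ((j:ℝ)*u) (((j:ℝ)+1)*u),
        gf k m ((⌈x/u⌉₊ : ℝ) * u) = gf k m (((j:ℝ)+1) * u) := by
      intro x hx
      obtain ⟨hx1, hx2⟩ := hx
      have hceil : ⌈x/u⌉₊ = j + 1 := by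
        rw [Nat.ceil_eq_iff (Nat.succ_ne_zero j)]
        constructor
        · push_cast
          simpa using (lt_div_iff₀ hu).mpr hx1
        · push_cast
          exact (div_le_iff₀ hu).mpr hx2
      rw [hceil]; push_cast; ring_nf
    rw [setIntegral_congr_fun measurableSet_Ioc hconst, setIntegral_const,
      Real.volume_real_Ioc, smul_eq_mul]
    congr 1
    rw [max_eq_left (by nlinarith : (0:ℝ) ≤ ((j:ℝ)+1)*u - (j:ℝ)*u)]
    ring
  simp_rw [hterm]
  rw [tsum_mul_left]

lemma core_tendsto (k m : ℕ) (hk : 1 ≤ k) :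
    Tendsto (fun u : ℝ => u * ∑' j : ℕ, gf k m (((j:ℝ)+1) * u)) (𝓝[>] (0:ℝ))
      (𝓝 ((1/(k:ℝ)) * Real.Gamma (m + 1/k))) := by
  have hDCT : Tendsto (fun u : ℝ => ∫ x in Ioi (0:ℝ), gf k m ((⌈x/u⌉₊ : ℝ) * u))
      (𝓝[>] (0:ℝ)) (𝓝 (∫ x in Ioi (0:ℝ), gf k m x)) := by
    refine MeasureTheory.tendsto_integral_filter_of_dominated_convergence (Db m)
      ?_ ?_ (D_integrable m) ?_
    · filter_upwards [self_mem_nhdsWithin] with u _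
      exact ((step_meas k m u).aestronglyMeasurable).restrict
    · filter_upwards [self_mem_nhdsWithin] with u hu
      have hu : (0:ℝ) < u := hu
      refine (ae_restrict_iff' measurableSet_Ioi).mpr (ae_of_all _ (fun x hx => ?_))
      have hx : (0:ℝ) < x := hx
      have hxc : x ≤ (⌈x/u⌉₊ : ℝ) * u := by
        have h := Nat.le_ceil (x/u)
        calc x = (x/u)*u := by field_simp
          _ ≤ (⌈x/u⌉₊ : ℝ) * u := mul_le_mul_of_nonneg_right h hu.le
      rw [Real.norm_of_nonneg (gf_nonneg k m (le_trans hx.le hxc))]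
      exact gf_le_D k m hk hx.le hxc
    · refine (ae_restrict_iff' measurableSet_Ioi).mpr (ae_of_all _ (fun x hx => ?_))
      have hx : (0:ℝ) < x := hx
      have harg : Tendsto (fun u : ℝ => (⌈x/u⌉₊ : ℝ) * u) (𝓝[>] (0:ℝ)) (𝓝 x) := by
        have hle : ∀ᶠ u in 𝓝[>] (0:ℝ), x ≤ (⌈x/u⌉₊ : ℝ) * u := by
          filter_upwards [self_mem_nhdsWithin] with u hu
          have hu : (0:ℝ) < u := hu
          calc x = (x/u)*u := by field_simp
            _ ≤ (⌈x/u⌉₊ : ℝ) * u := mul_le_mul_of_nonneg_right (Nat.le_ceil _) hu.le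
        have hge : ∀ᶠ u in 𝓝[>] (0:ℝ), (⌈x/u⌉₊ : ℝ) * u ≤ x + u := by
          filter_upwards [self_mem_nhdsWithin] with u hu
          have hu : (0:ℝ) < u := hu
          have h1 : (⌈x/u⌉₊ : ℝ) < x/u + 1 := Nat.ceil_lt_add_one (by positivity)
          have := mul_le_mul_of_nonneg_right h1.le hu.le
          calc (⌈x/u⌉₊ : ℝ) * u ≤ (x/u + 1) * u := this
            _ = x + u := by field_simp
        have hupper : Tendsto (fun u : ℝ => x + u) (𝓝[>] (0:ℝ)) (𝓝 x) := by
          have : Tendsto (fun u : ℝ => x + u) (𝓝 (0:ℝ)) (𝓝 (x + 0)) :=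
            tendsto_const_nhds.add tendsto_id
          rw [add_zero] at this
          exact this.mono_left nhdsWithin_le_nhds
        exact tendsto_of_tendsto_of_tendsto_of_le_of_le' tendsto_const_nhds hupper hle hge
      exact ((gf_cont k m).continuousAt.tendsto).comp harg
  rw [gf_integral k m hk] at hDCT
  refine hDCT.congr' ?_
  filter_upwards [self_mem_nhdsWithin] with u hu
  exact step_eq k m hk hu

lemma core_bound (k m : ℕ) (hk : 1 ≤ k) {u : ℝ} (hu : 0 < u) :
    u * ∑' j : ℕ, gf k m (((j:ℝ)+1) * u) ≤ ∫ x in Ioi (0:ℝ), Db m x := by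
  rw [← step_eq k m hk hu]
  refine MeasureTheory.integral_mono_ae (step_integrable k m hk hu) (D_integrable m) ?_
  refine (ae_restrict_iff' measurableSet_Ioi).mpr (ae_of_all _ (fun x hx => ?_))
  have hx : (0:ℝ) < x := hx
  have hxc : x ≤ (⌈x/u⌉₊ : ℝ) * u := by
    have h := Nat.le_ceil (x/u)
    calc x = (x/u)*u := by field_simp
      _ ≤ (⌈x/u⌉₊ : ℝ) * u := mul_le_mul_of_nonneg_right h hu.le
  exact gf_le_D k m hk hx.le hxc

lemma core_nonneg (k m : ℕ) {u : ℝ} (hu : 0 < u) :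
    0 ≤ u * ∑' j : ℕ, gf k m (((j:ℝ)+1) * u) := by
  refine mul_nonneg hu.le (tsum_nonneg (fun j => gf_nonneg k m (by positivity)))

noncomputable def Sf (k m : ℕ) (t : ℝ) : ℝ :=
  ∑' j : ℕ, ((j:ℝ)+1)^(k*m) * Real.exp (-(((j:ℝ)+1)^k * t))

lemma Sf_nonneg (k m : ℕ) (t : ℝ) : 0 ≤ Sf k m t :=
  tsum_nonneg (fun j => by positivity)

lemma subst_eq (k m : ℕ) (hk : 1 ≤ k) {t : ℝ} (ht : 0 < t) :
    t ^ ((m:ℝ) + 1/k) * Sf k m t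
      = (t ^ (1/(k:ℝ))) * ∑' j : ℕ, gf k m (((j:ℝ)+1) * (t ^ (1/(k:ℝ)))) := by
  have hk0 : (0:ℝ) < k := by exact_mod_cast hk
  set u : ℝ := t ^ (1/(k:ℝ)) with hu
  have hupos : 0 < u := Real.rpow_pos_of_pos ht _
  have huk : u ^ k = t := by
    rw [hu, ← Real.rpow_natCast (t ^ (1/(k:ℝ))) k, ← Real.rpow_mul ht.le]
    rw [one_div_mul_cancel (ne_of_gt hk0), Real.rpow_one]
  have hpow : t ^ ((m:ℝ) + 1/k) = u ^ (k*m) * u := by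
    rw [← pow_succ, hu, ← Real.rpow_natCast (t ^ (1/(k:ℝ))) (k*m+1), ← Real.rpow_mul ht.le]
    congr 1
    push_cast
    field_simp
  rw [hpow]
  have hterm : ∀ j : ℕ, gf k m (((j:ℝ)+1) * u)
      = u^(k*m) * (((j:ℝ)+1)^(k*m) * Real.exp (-(((j:ℝ)+1)^k * t))) := by
    intro j
    unfold gf
    rw [mul_pow, mul_pow, huk]
    ring
  rw [tsum_congr hterm, tsum_mul_left]
  unfold Sf
  ring

lemma Sf_tendsto (k m : ℕ) (hk : 1 ≤ k) :
    Tendsto (fun t : ℝ => t ^ ((m:ℝ) + 1/k) * Sf k m t) (𝓝[>] (0:ℝ))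
      (𝓝 ((1/(k:ℝ)) * Real.Gamma (m + 1/k))) := by
  have hk0 : (0:ℝ) < k := by exact_mod_cast hk
  have hmap : Tendsto (fun t : ℝ => t ^ (1/(k:ℝ))) (𝓝[>] (0:ℝ)) (𝓝[>] (0:ℝ)) := by
    rw [tendsto_nhdsWithin_iff]
    constructor
    · have h := (Real.continuousAt_rpow_const 0 (1/(k:ℝ)) (Or.inr (by positivity))).tendsto
      rw [Real.zero_rpow (by positivity : (1/(k:ℝ)) ≠ 0)] at h
      exact h.mono_left nhdsWithin_le_nhds
    · filter_upwards [self_mem_nhdsWithin] with t ht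
      exact Real.rpow_pos_of_pos ht _
  have := (core_tendsto k m hk).comp hmap
  refine this.congr' ?_
  filter_upwards [self_mem_nhdsWithin] with t ht
  exact (subst_eq k m hk ht).symm

lemma Sf_bound (k m : ℕ) (hk : 1 ≤ k) {t : ℝ} (ht : 0 < t) :
    t ^ ((m:ℝ) + 1/k) * Sf k m t ≤ ∫ x in Ioi (0:ℝ), Db m x := by
  rw [subst_eq k m hk ht]
  exact core_bound k m hk (Real.rpow_pos_of_pos ht _)

lemma summable_zeta_aux (k : ℕ) (hk : 1 ≤ k) :
    Summable (fun n : ℕ => (((n:ℝ)+1) ^ ((1:ℝ)+1/k))⁻¹) := by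
  have hk0 : (0:ℝ) < k := by exact_mod_cast hk
  have hp : (1:ℝ) < 1 + 1/k := by
    have : (0:ℝ) < 1/k := by positivity
    linarith
  have h := (Real.summable_one_div_nat_rpow (p := 1+1/(k:ℝ))).mpr hp
  have h2 := (summable_nat_add_iff (f := fun n : ℕ => 1 / (n:ℝ) ^ ((1:ℝ)+1/k)) 1).mpr h
  refine h2.congr (fun n => ?_)
  push_cast
  rw [one_div]

lemma layer_tendsto (k m : ℕ) (hk : 1 ≤ k) :
    Tendsto (fun s : ℝ => ∑' n : ℕ, (((n:ℝ)+1) ^ ((1:ℝ)+1/k))⁻¹ *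
        ((((n:ℝ)+1)*s) ^ ((m:ℝ) + 1/k) * Sf k m (((n:ℝ)+1)*s)))
      (𝓝[>] (0:ℝ))
      (𝓝 ((∑' n : ℕ, (((n:ℝ)+1) ^ ((1:ℝ)+1/k))⁻¹) * ((1/(k:ℝ)) * Real.Gamma (m + 1/k)))) := by
  have hB : ∀ n : ℕ, ∀ s : ℝ, 0 < s →
      ‖(((n:ℝ)+1) ^ ((1:ℝ)+1/k))⁻¹ *
        ((((n:ℝ)+1)*s) ^ ((m:ℝ) + 1/k) * Sf k m (((n:ℝ)+1)*s))‖
      ≤ (((n:ℝ)+1) ^ ((1:ℝ)+1/k))⁻¹ * ∫ x in Ioi (0:ℝ), Db m x := by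
    intro n s hs
    have hns : (0:ℝ) < ((n:ℝ)+1)*s := by positivity
    have h1 : (0:ℝ) ≤ (((n:ℝ)+1)*s) ^ ((m:ℝ) + 1/k) * Sf k m (((n:ℝ)+1)*s) :=
      mul_nonneg (Real.rpow_nonneg hns.le _) (Sf_nonneg k m _)
    rw [Real.norm_of_nonneg (mul_nonneg (by positivity) h1)]
    exact mul_le_mul_of_nonneg_left (Sf_bound k m hk hns) (by positivity)
  have hlim := tsum_mul_right (L := SummationFilter.unconditional ℕ) (f := fun n : ℕ => (((n:ℝ)+1) ^ ((1:ℝ)+1/k))⁻¹)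
    (a := (1/(k:ℝ)) * Real.Gamma (m + 1/k))
  rw [← hlim]
  refine tendsto_tsum_of_dominated_convergence
    ((summable_zeta_aux k hk).mul_right (∫ x in Ioi (0:ℝ), Db m x)) (fun n => ?_) ?_
  · refine Tendsto.const_mul _ ?_
    have hmap : Tendsto (fun s : ℝ => ((n:ℝ)+1)*s) (𝓝[>] (0:ℝ)) (𝓝[>] (0:ℝ)) := by
      rw [tendsto_nhdsWithin_iff]
      constructor
      · have : Tendsto (fun s : ℝ => ((n:ℝ)+1)*s) (𝓝 (0:ℝ)) (𝓝 (((n:ℝ)+1)*0)) :=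
          (tendsto_id.const_mul _)
        rw [mul_zero] at this
        exact this.mono_left nhdsWithin_le_nhds
      · filter_upwards [self_mem_nhdsWithin] with s hs
        have hs : (0:ℝ) < s := hs
        exact mul_pos (by positivity) hs
    exact (Sf_tendsto k m hk).comp hmap
  · filter_upwards [self_mem_nhdsWithin] with s hs
    exact fun n => hB n s hs

noncomputable def Af (k : ℕ) (p : ℕ×ℕ) : ℝ := ((p.2:ℝ)+1) * ((p.1:ℝ)+1)^k

noncomputable def Gn (k m : ℕ) (s : ℝ) : ℝ :=
  ∑' p : ℕ×ℕ, (Af k p)^m * Real.exp (Af k p * s) / ((p.2:ℝ)+1)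

lemma summable_G (k m : ℕ) (hk : 1 ≤ k) {s : ℝ} (hs : s < 0) :
    Summable (fun p : ℕ×ℕ => (Af k p)^m * Real.exp (Af k p * s) / ((p.2:ℝ)+1)) := by
  refine Summable.of_nonneg_of_le (fun p => ?_) (fun p => ?_) (summable_prod k m hk hs)
  · have : (0:ℝ) < Af k p := by unfold Af; positivity
    positivity
  · have h1 : (0:ℝ) ≤ (Af k p)^m * Real.exp (Af k p * s) := by
      have : (0:ℝ) < Af k p := by unfold Af; positivity
      positivity
    have h2 : (1:ℝ) ≤ (p.2:ℝ)+1 := by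
      have := Nat.cast_nonneg (α := ℝ) p.2; linarith
    exact (div_le_self h1 h2).trans_eq (by unfold Af; ring_nf)

lemma bridge (k m : ℕ) (hk : 1 ≤ k) {s : ℝ} (hs : 0 < s) :
    s ^ ((m:ℝ) + 1/k) * Gn k m (-s)
      = ∑' n : ℕ, (((n:ℝ)+1) ^ ((1:ℝ)+1/k))⁻¹ *
          ((((n:ℝ)+1)*s) ^ ((m:ℝ) + 1/k) * Sf k m (((n:ℝ)+1)*s)) := by
  set f : ℕ×ℕ → ℝ := fun p => (Af k p)^m * Real.exp (Af k p * (-s)) / ((p.2:ℝ)+1) with hf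
  have hfsum : Summable f := summable_G k m hk (by linarith)
  have hsum2 : Summable (fun q : ℕ×ℕ => f (q.2, q.1)) :=
    ((Equiv.prodComm ℕ ℕ).summable_iff).mpr hfsum
  have h1 : Gn k m (-s) = ∑' n : ℕ, ∑' j : ℕ, f (j, n) := by
    have e1 : ∑' p : ℕ×ℕ, f p = ∑' q : ℕ×ℕ, f (q.2, q.1) :=
      ((Equiv.prodComm ℕ ℕ).tsum_eq f).symm
    rw [show Gn k m (-s) = ∑' p : ℕ×ℕ, f p from rfl, e1, Summable.tsum_prod' hsum2 hsum2.prod_factor]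
  rw [h1, ← tsum_mul_left]
  refine tsum_congr (fun n => ?_)
  have hn1 : (0:ℝ) < (n:ℝ)+1 := by positivity
  have hSf : Sf k m (((n:ℝ)+1)*s)
      = ∑' j : ℕ, ((j:ℝ)+1)^(k*m) * Real.exp (-(((j:ℝ)+1)^k * (((n:ℝ)+1)*s))) := rfl
  rw [hSf, ← tsum_mul_left, ← tsum_mul_left, ← tsum_mul_left]
  refine tsum_congr (fun j => ?_)
  have e1 : Real.exp ((((n:ℝ)+1)*((j:ℝ)+1)^k) * (-s))
      = Real.exp (-(((j:ℝ)+1)^k * (((n:ℝ)+1)*s))) := by congr 1; ring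
  have e2 : ((((n:ℝ)+1)*((j:ℝ)+1)^k))^m = ((n:ℝ)+1)^m * ((j:ℝ)+1)^(k*m) := by
    rw [mul_pow, pow_mul]
  have e3 : ((((n:ℝ)+1)*s)) ^ ((m:ℝ)+1/k)
      = ((n:ℝ)+1)^((m:ℝ)+1/k) * s^((m:ℝ)+1/k) := Real.mul_rpow hn1.le hs.le
  have e4 : (((n:ℝ)+1) ^ ((1:ℝ)+1/k))⁻¹ * ((n:ℝ)+1)^((m:ℝ)+1/(k:ℝ))
      = ((n:ℝ)+1)^m / ((n:ℝ)+1) := by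
    rw [← Real.rpow_neg hn1.le, ← Real.rpow_add hn1]
    have heq : -((1:ℝ)+1/k) + ((m:ℝ)+1/k) = (m:ℝ) - 1 := by ring
    rw [heq, Real.rpow_sub hn1, Real.rpow_natCast, Real.rpow_one]
  have hAf : Af k (j, n) = ((n:ℝ)+1)*((j:ℝ)+1)^k := rfl
  rw [hf]
  simp only [hAf]
  rw [e1, e2, e3]
  set E := Real.exp (-(((j:ℝ)+1)^k * (((n:ℝ)+1)*s))) with hE
  set aa := s ^ ((m:ℝ)+1/(k:ℝ)) with haa
  set bb := ((n:ℝ)+1)^((m:ℝ)+1/(k:ℝ)) with hbb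
  have e4' : (((n:ℝ)+1) ^ ((1:ℝ)+1/(k:ℝ)))⁻¹ * bb = ((n:ℝ)+1)^m * (((n:ℝ)+1))⁻¹ := by
    rw [hbb, e4, div_eq_mul_inv]
  rw [div_eq_mul_inv]
  linear_combination (-(aa * (((j:ℝ)+1)^(k*m) * E))) * e4' 

/-- Fulcrum of `P_k`: `F_k(s) = Σ_{j≥1} ln(1/(1 - e^{j^k s}))`, for `s < 0`. -/
noncomputable def Fk (k : ℕ) (s : ℝ) : ℝ :=
  ∑' j : ℕ, Real.log (1 - Real.exp ((((j + 1) ^ k : ℕ) : ℝ) * s))⁻¹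

lemma Fk_eq (k : ℕ) (hk : 1 ≤ k) {s : ℝ} (hs : s < 0) : Fk k s = Gn k 0 s := by
  have hGsum : Summable (fun p : ℕ×ℕ =>
      (Af k p)^0 * Real.exp (Af k p * s) / ((p.2:ℝ)+1)) := summable_G k 0 hk hs
  have h1 : Gn k 0 s = ∑' j : ℕ, ∑' n : ℕ,
      (Af k (j,n))^0 * Real.exp (Af k (j,n) * s) / ((n:ℝ)+1) :=
    Summable.tsum_prod' hGsum hGsum.prod_factor
  rw [h1]
  unfold Fk
  refine tsum_congr (fun j => ?_)
  have hx : ((j:ℝ)+1)^k * s < 0 :=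
    mul_neg_of_pos_of_neg (by positivity) hs
  set x : ℝ := Real.exp (((j:ℝ)+1)^k * s) with hxdef
  have hx0 : 0 < x := Real.exp_pos _
  have hx1 : x < 1 := Real.exp_lt_one_iff.mpr hx
  have habs : |x| < 1 := by rw [abs_of_pos hx0]; exact hx1
  have hHS := hasSum_pow_div_log_of_abs_lt_one habs
  have hterm : ∀ n : ℕ, x ^ (n+1) / ((n:ℕ)+1 : ℝ)
      = (Af k (j,n))^0 * Real.exp (Af k (j,n) * s) / ((n:ℝ)+1) := by
    intro n
    rw [pow_zero, one_mul]
    congr 1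
    rw [hxdef, ← Real.exp_nat_mul]
    congr 1
    show ((n+1 : ℕ) : ℝ) * (((j:ℝ)+1)^k * s) = Af k (j,n) * s
    unfold Af
    push_cast
    ring
  have hcast : (((j + 1) ^ k : ℕ) : ℝ) * s = ((j:ℝ)+1)^k * s := by push_cast; ring
  rw [hcast, Real.log_inv]
  have := hHS.tsum_eq
  rw [← tsum_congr hterm]
  rw [this]

lemma Gn_hasDerivAt (k m : ℕ) (hk : 1 ≤ k) {s : ℝ} (hs : s < 0) :
    HasDerivAt (Gn k m) (Gn k (m+1) s) s := by
  have hs2 : s/2 < 0 := by linarith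
  have hmem : s ∈ Iio (s/2) := by simp only [mem_Iio]; linarith
  have hu : Summable (fun p : ℕ×ℕ => (Af k p)^(m+1) * Real.exp (Af k p * (s/2))) := by
    have := summable_prod k (m+1) hk hs2
    exact this.congr (fun p => rfl)
  have hg : ∀ (p : ℕ×ℕ) (y : ℝ), y ∈ Iio (s/2) →
      HasDerivAt (fun z => (Af k p)^m * Real.exp (Af k p * z) / ((p.2:ℝ)+1))
        ((Af k p)^(m+1) * Real.exp (Af k p * y) / ((p.2:ℝ)+1)) y := by
    intro p y _
    have h1 : HasDerivAt (fun z : ℝ => Af k p * z) (Af k p) y := by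
      simpa using (hasDerivAt_id y).const_mul (Af k p)
    have h2 : HasDerivAt (fun z : ℝ => Real.exp (Af k p * z))
        (Real.exp (Af k p * y) * Af k p) y := (Real.hasDerivAt_exp _).comp y h1
    have h3 := (h2.const_mul ((Af k p)^m)).div_const (((p.2:ℝ)+1))
    refine h3.congr_deriv ?_
    rw [pow_succ]
    ring
  have hg' : ∀ (p : ℕ×ℕ) (y : ℝ), y ∈ Iio (s/2) →
      ‖(Af k p)^(m+1) * Real.exp (Af k p * y) / ((p.2:ℝ)+1)‖
        ≤ (Af k p)^(m+1) * Real.exp (Af k p * (s/2)) := by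
    intro p y hy
    have hA : (0:ℝ) < Af k p := by unfold Af; positivity
    have hp2 : (1:ℝ) ≤ (p.2:ℝ)+1 := by
      have := Nat.cast_nonneg (α := ℝ) p.2; linarith
    rw [Real.norm_of_nonneg (by positivity)]
    have hle : Real.exp (Af k p * y) ≤ Real.exp (Af k p * (s/2)) :=
      Real.exp_le_exp.mpr (mul_le_mul_of_nonneg_left (le_of_lt hy) hA.le)
    calc (Af k p)^(m+1) * Real.exp (Af k p * y) / ((p.2:ℝ)+1)
        ≤ (Af k p)^(m+1) * Real.exp (Af k p * y) := div_le_self (by positivity) hp2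
      _ ≤ (Af k p)^(m+1) * Real.exp (Af k p * (s/2)) :=
          mul_le_mul_of_nonneg_left hle (by positivity)
  have hg0 : Summable (fun p : ℕ×ℕ =>
      (Af k p)^m * Real.exp (Af k p * s) / ((p.2:ℝ)+1)) := summable_G k m hk hs
  exact hasDerivAt_tsum_of_isPreconnected hu isOpen_Iio (isPreconnected_Iio)
    hg hg' hmem hg0 hmem

lemma iter_eq (k : ℕ) (hk : 1 ≤ k) (m : ℕ) :
    ∀ s : ℝ, s < 0 → iteratedDeriv m (Fk k) s = Gn k m s := by
  induction m with
  | zero =>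
    intro s hs
    rw [iteratedDeriv_zero]
    exact Fk_eq k hk hs
  | succ m ih =>
    intro s hs
    rw [iteratedDeriv_succ]
    have hev : iteratedDeriv m (Fk k) =ᶠ[𝓝 s] Gn k m := by
      filter_upwards [isOpen_Iio.mem_nhds (show s ∈ Iio (0:ℝ) from hs)] with y hy
      exact ih y hy
    rw [hev.deriv_eq]
    exact (Gn_hasDerivAt k m hk hs).deriv

lemma zeta_re_eq (k : ℕ) (hk : 1 ≤ k) :
    (riemannZeta (1 + 1/(k:ℂ))).re = ∑' n : ℕ, (((n:ℝ)+1) ^ ((1:ℝ)+1/(k:ℝ)))⁻¹ := by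
  have hk0 : (0:ℝ) < k := by exact_mod_cast hk
  have hcast : (1 + 1/(k:ℂ)) = ((((1:ℝ) + 1/(k:ℝ)) : ℝ) : ℂ) := by push_cast; ring
  have hre : (1 + 1/(k:ℂ)).re = (1:ℝ) + 1/(k:ℝ) := by rw [hcast, Complex.ofReal_re]
  have h1 : (1:ℝ) < 1 + 1/(k:ℝ) := by
    have : (0:ℝ) < 1/k := by positivity
    linarith
  rw [zeta_eq_tsum_one_div_nat_add_one_cpow (by rw [hre]; exact_mod_cast h1)]
  have hterm : ∀ n : ℕ, (1 : ℂ) / ((n:ℂ)+1) ^ (1 + 1/(k:ℂ))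
      = (((((n:ℝ)+1) ^ ((1:ℝ)+1/(k:ℝ)))⁻¹ : ℝ) : ℂ) := by
    intro n
    have hb : (0:ℝ) ≤ (n:ℝ)+1 := by positivity
    have h2 : ((n:ℂ)+1) = ((((n:ℝ)+1) : ℝ) : ℂ) := by push_cast; ring
    rw [h2, hcast, ← Complex.ofReal_cpow hb, one_div, ← Complex.ofReal_inv]
  rw [tsum_congr hterm, ← Complex.ofReal_tsum, Complex.ofReal_re]

theorem stmt3 (k : ℕ) (hk : 1 ≤ k) (m : ℕ) :
    Tendsto (fun s : ℝ => s ^ ((m : ℝ) + 1 / k) * iteratedDeriv m (Fk k) (-s))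
      (𝓝[>] (0 : ℝ))
      (𝓝 ((1 / k) * (riemannZeta (1 + 1 / (k : ℂ))).re * Real.Gamma (m + 1 / k))) := by
  have hmain := layer_tendsto k m hk
  have hconst : (∑' n : ℕ, (((n:ℝ)+1) ^ ((1:ℝ)+1/(k:ℝ)))⁻¹) * ((1/(k:ℝ)) * Real.Gamma (m + 1/k))
      = (1 / (k:ℝ)) * (riemannZeta (1 + 1 / (k : ℂ))).re * Real.Gamma (m + 1/k) := by
    rw [zeta_re_eq k hk]
    ring
  rw [hconst] at hmain
  refine hmain.congr' ?_
  filter_upwards [self_mem_nhdsWithin] with s hs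
  have hs : (0:ℝ) < s := hs
  rw [← bridge k m hk hs, iter_eq k hk m (-s) (by linarith)]
end

section
/- One has 1/12 − ∫_1^∞ B₂({x})/(2x²) dx = 1 − ln(√(2π)), where B₂(t) = t² − t + 1/6 is the second Bernoulli polynomial and {x} denotes the fractional part of x. -/
open MeasureTheory Filter Real

noncomputable def fB (x : ℝ) : ℝ := (Int.fract x ^ 2 - Int.fract x + 1 / 6) / (2 * x ^ 2)

lemma fB_integrable : IntegrableOn fB (Set.Ioi (1:ℝ)) := by
  have hmeas : AEStronglyMeasurable fB (volume.restrict (Set.Ioi (1:ℝ))) := by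
    apply Measurable.aestronglyMeasurable
    unfold fB
    exact (((measurable_fract.pow_const 2).sub measurable_fract).add_const (1/6)).div
      ((measurable_id.pow_const 2).const_mul 2)
  have hint : IntegrableOn (fun x : ℝ => 2 * x ^ (-2 : ℝ)) (Set.Ioi (1:ℝ)) :=
    (integrableOn_Ioi_rpow_of_lt (by norm_num) one_pos).const_mul 2
  refine hint.mono' hmeas ?_
  filter_upwards [ae_restrict_mem measurableSet_Ioi] with x hx
  have hx1 : (1:ℝ) < x := hx
  have hx0 : (0:ℝ) < x := by linarith
  have h1 : x ^ (-2 : ℝ) = (x ^ 2)⁻¹ := by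
    rw [show (-2 : ℝ) = -(2:ℕ) by norm_num, Real.rpow_neg hx0.le, Real.rpow_natCast]
  have hf : |Int.fract x ^ 2 - Int.fract x + 1 / 6| ≤ 3 := by
    have h0 := Int.fract_nonneg x
    have h1' := Int.fract_lt_one x
    rw [abs_le]
    constructor <;> nlinarith
  have hx2 : (0:ℝ) < x ^ 2 := by positivity
  rw [Real.norm_eq_abs, fB, abs_div, abs_of_pos (by positivity : (0:ℝ) < 2 * x ^ 2), h1]
  rw [div_le_iff₀ (by positivity)]
  calc |Int.fract x ^ 2 - Int.fract x + 1 / 6| ≤ 3 := hf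
    _ ≤ 2 * (x ^ 2)⁻¹ * (2 * x ^ 2) := by
        rw [show 2 * (x ^ 2)⁻¹ * (2 * x ^ 2) = 4 * ((x^2)⁻¹ * x^2) by ring,
          inv_mul_cancel₀ hx2.ne']
        norm_num

lemma fract_eq_aux (n : ℕ) {x : ℝ} (hx : (n:ℝ) ≤ x) (hx' : x < n + 1) :
    Int.fract x = x - n := by
  have h := Int.fract_add_natCast (x - n) n
  rw [show x - (n:ℝ) + n = x by ring] at h
  have h2 : Int.fract (x - (n:ℝ)) = x - n := Int.fract_eq_self.mpr ⟨by linarith, by linarith⟩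
  exact h.trans h2

lemma interval_int (n : ℕ) (hn : 1 ≤ n) :
    ∫ x in (n:ℝ)..(n+1), fB x
      = 1 - ((n:ℝ) + 1/2) * (Real.log (n+1) - Real.log n) + 1/12 * (1/n - 1/(n+1)) := by
  have hn0 : (0:ℝ) < n := by exact_mod_cast hn
  set g : ℝ → ℝ := fun x => ((x - n)^2 - (x - n) + 1/6) / (2 * x^2) with hg
  have hcongr : ∫ x in (n:ℝ)..(n+1), fB x = ∫ x in (n:ℝ)..(n+1), g x := by
    apply intervalIntegral.integral_congr_ae
    have hsing : (volume : Measure ℝ) {((n:ℝ)+1)} = 0 := measure_singleton _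
    have hne : ∀ᵐ x : ℝ, x ≠ (n:ℝ)+1 := by
      rw [ae_iff]
      simpa using hsing
    filter_upwards [hne] with x hxne hx
    rw [Set.uIoc_of_le (by linarith : (n:ℝ) ≤ n+1)] at hx
    have hxlt : x < (n:ℝ) + 1 := lt_of_le_of_ne hx.2 hxne
    rw [fB, hg, fract_eq_aux n hx.1.le hxlt]
  rw [hcongr]
  set G : ℝ → ℝ := fun x => x/2 - ((2*(n:ℝ)+1)/2) * Real.log x
      - (((n:ℝ)^2 + n + 1/6)/2) * x⁻¹ with hG
  have hderiv : ∀ x ∈ Set.uIcc (n:ℝ) (n+1), HasDerivAt G (g x) x := by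
    intro x hx
    rw [Set.uIcc_of_le (by linarith : (n:ℝ) ≤ n+1)] at hx
    have hx0 : (0:ℝ) < x := lt_of_lt_of_le hn0 hx.1
    have h1 : HasDerivAt (fun x : ℝ => x/2) (1/2) x := (hasDerivAt_id x).div_const 2
    have h2 : HasDerivAt (fun x : ℝ => ((2*(n:ℝ)+1)/2) * Real.log x)
        (((2*(n:ℝ)+1)/2) * x⁻¹) x := (Real.hasDerivAt_log hx0.ne').const_mul _
    have h3 : HasDerivAt (fun x : ℝ => (((n:ℝ)^2 + n + 1/6)/2) * x⁻¹)
        ((((n:ℝ)^2 + n + 1/6)/2) * (-(x^2)⁻¹)) x := (hasDerivAt_inv hx0.ne').const_mul _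
    have h := (h1.sub h2).sub h3
    have heq : g x = 1/2 - ((2*(n:ℝ)+1)/2) * x⁻¹ - (((n:ℝ)^2 + n + 1/6)/2) * (-(x^2)⁻¹) := by
      rw [hg]
      field_simp
      ring
    rw [hG, heq]
    exact h
  have hcont : IntervalIntegrable g volume (n:ℝ) (n+1) := by
    apply ContinuousOn.intervalIntegrable
    apply ContinuousOn.div (by fun_prop) (by fun_prop)
    intro x hx
    rw [Set.uIcc_of_le (by linarith : (n:ℝ) ≤ n+1)] at hx
    have hx0 : (0:ℝ) < x := lt_of_lt_of_le hn0 hx.1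
    positivity
  rw [intervalIntegral.integral_eq_sub_of_hasDerivAt hderiv hcont, hG]
  simp only
  have hne1 : (n:ℝ) ≠ 0 := hn0.ne'
  have hne2 : (n:ℝ) + 1 ≠ 0 := by positivity
  field_simp
  ring

lemma intervalIntegrable_fB {a b : ℝ} (ha : 1 ≤ a) (hb : 1 ≤ b) :
    IntervalIntegrable fB volume a b := by
  rw [intervalIntegrable_iff]
  apply fB_integrable.mono_set
  intro x hx
  exact lt_of_le_of_lt (le_inf ha hb) hx.1

lemma partial_sum (N : ℕ) :
    ∫ x in (1:ℝ)..((N:ℝ)+1), fB x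
      = N - (((N:ℝ) + 1/2) * Real.log ((N:ℝ)+1) - Real.log (Nat.factorial N))
        + 1/12 * (1 - 1/((N:ℝ)+1)) := by
  induction N with
  | zero => simp
  | succ N ih =>
    have h1 : IntervalIntegrable fB volume 1 ((N:ℝ)+1) := by
      apply intervalIntegrable_fB le_rfl
      have : (0:ℝ) ≤ N := Nat.cast_nonneg N
      linarith
    have h2 : IntervalIntegrable fB volume ((N:ℝ)+1) ((N:ℝ)+1+1) := by
      have : (0:ℝ) ≤ N := Nat.cast_nonneg N
      apply intervalIntegrable_fB <;> linarith
    have key : (∫ x in (1:ℝ)..((N:ℝ)+1), fB x) + ∫ x in ((N:ℝ)+1)..((N:ℝ)+1+1), fB x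
        = ∫ x in (1:ℝ)..((N:ℝ)+1+1), fB x :=
      intervalIntegral.integral_add_adjacent_intervals h1 h2
    have hstep := interval_int (N+1) (by omega)
    push_cast at hstep ⊢
    rw [← key, ih, hstep]
    have hfact : Real.log ((Nat.factorial (N+1) : ℝ))
        = Real.log ((N:ℝ)+1) + Real.log (Nat.factorial N) := by
      rw [Nat.factorial_succ]
      push_cast
      rw [Real.log_mul (by positivity) (by exact_mod_cast Nat.factorial_pos N |>.ne')]
    push_cast at hfact
    rw [hfact]
    have hne1 : (N:ℝ) + 1 ≠ 0 := by positivity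
    have hne2 : (N:ℝ) + 1 + 1 ≠ 0 := by positivity
    field_simp
    ring

lemma tendsto_half_log :
    Tendsto (fun N : ℕ => ((N:ℝ) + 1/2) * (Real.log ((N:ℝ)+1) - Real.log N)) atTop (nhds 1) := by
  have h1 : Tendsto (fun x : ℝ => x * Real.log (1 + 1/x)) atTop (nhds 1) := by
    simpa using Real.tendsto_mul_log_one_add_div_atTop 1
  have h2 : Tendsto (fun N : ℕ => (N:ℝ) * Real.log (1 + 1/(N:ℝ))) atTop (nhds 1) :=
    h1.comp tendsto_natCast_atTop_atTop
  have h3 : Tendsto (fun N : ℕ => Real.log (1 + 1/(N:ℝ))) atTop (nhds 0) := by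
    have hb : Tendsto (fun N : ℕ => 1 + 1/(N:ℝ)) atTop (nhds 1) := by
      simpa using (tendsto_const_nhds (x := (1:ℝ)) (f := atTop)).add
        tendsto_one_div_atTop_nhds_zero_nat
    have := ((Real.continuousAt_log one_ne_zero).tendsto).comp hb
    simpa [Function.comp_def] using this
  have h4 := h2.add (h3.const_mul (1/2))
  rw [show (1:ℝ) + 1/2 * 0 = 1 by norm_num] at h4
  apply h4.congr'
  filter_upwards [eventually_ge_atTop 1] with N hN
  have hN0 : (0:ℝ) < N := by exact_mod_cast hN
  have hlog : Real.log (1 + 1/(N:ℝ)) = Real.log ((N:ℝ)+1) - Real.log N := by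
    rw [show (1:ℝ) + 1/(N:ℝ) = ((N:ℝ)+1)/N by field_simp, Real.log_div (by positivity) hN0.ne']
  rw [hlog]
  ring

lemma stirling_log :
    Tendsto (fun n : ℕ => Real.log (Nat.factorial n) - ((n:ℝ) + 1/2) * Real.log n + n)
      atTop (nhds (Real.log (Real.sqrt (2 * π)))) := by
  have hpos : (0:ℝ) < Real.sqrt π := Real.sqrt_pos.mpr Real.pi_pos
  have h1 : Tendsto (fun n => Real.log (Stirling.stirlingSeq n)) atTop
      (nhds (Real.log (Real.sqrt π))) :=
    ((Real.continuousAt_log hpos.ne').tendsto).comp Stirling.tendsto_stirlingSeq_sqrt_pi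
  have h2 := h1.add (tendsto_const_nhds (x := (1/2) * Real.log 2) (f := atTop))
  have hval : Real.log (Real.sqrt π) + 1/2 * Real.log 2 = Real.log (Real.sqrt (2 * π)) := by
    rw [Real.log_sqrt Real.pi_pos.le, Real.log_sqrt (by positivity),
      Real.log_mul two_ne_zero Real.pi_pos.ne']
    ring
  rw [hval] at h2
  apply h2.congr'
  filter_upwards [eventually_ge_atTop 1] with n hn
  have hn0 : (0:ℝ) < n := by exact_mod_cast hn
  rw [Stirling.log_stirlingSeq_formula,
    Real.log_mul two_ne_zero hn0.ne',
    Real.log_div hn0.ne' (Real.exp_ne_zero 1), Real.log_exp]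
  ring

theorem stmt16 :
    1 / 12 - ∫ x in Set.Ioi (1 : ℝ), (Int.fract x ^ 2 - Int.fract x + 1 / 6) / (2 * x ^ 2) =
      1 - Real.log (Real.sqrt (2 * Real.pi)) := by
  have hI : Tendsto (fun N : ℕ => ∫ x in (1:ℝ)..((N:ℝ)+1), fB x) atTop
      (nhds (∫ x in Set.Ioi (1:ℝ), fB x)) :=
    intervalIntegral_tendsto_integral_Ioi 1 fB_integrable
      (tendsto_atTop_add_const_right _ 1 tendsto_natCast_atTop_atTop)
  have hE : Tendsto (fun N : ℕ => ∫ x in (1:ℝ)..((N:ℝ)+1), fB x) atTop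
      (nhds (Real.log (Real.sqrt (2*π)) - 1 + (1/12 - 1/12 * 0))) := by
    have h := ((stirling_log.sub tendsto_half_log).add
      ((tendsto_const_nhds (x := (1:ℝ)/12) (f := atTop)).sub
        (tendsto_one_div_add_atTop_nhds_zero_nat.const_mul (1/12))))
    apply h.congr
    intro N
    rw [partial_sum N]
    ring
  have huniq := tendsto_nhds_unique hI hE
  have hEq : (∫ x in Set.Ioi (1 : ℝ), (Int.fract x ^ 2 - Int.fract x + 1 / 6) / (2 * x ^ 2))
      = ∫ x in Set.Ioi (1:ℝ), fB x := rfl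
  rw [hEq, huniq]
  ring
end

section
/- (Báez-Duarte substitution.) Let f(z) = Σ_{n=0}^∞ a_n z^n be a nonconstant power series with nonnegative coefficients, a_0 > 0, and radius of convergence R > 0; let m_f(t) = t f'(t)/f(t) and σ_f²(t) = t m_f'(t). Assume f is strongly Gaussian. Let m̃_f be a continuous, strictly increasing function on [0,R) with m̃_f(t) → +∞ as t ↑ R such that (m_f(t) − m̃_f(t))/σ_f(t) → 0 as t ↑ R, and for each n ≥ 1 let τ_n ∈ (0,R) be defined by m̃_f(τ_n) = n. Let σ̃_f be any function with σ_f(t)/σ̃_f(t) → 1 as t ↑ R. Then a_n ~ f(τ_n)/(√(2π) τ_n^n σ̃_f(τ_n)) as n → ∞. -/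
open Filter Topology

/-- The power series `f(t) = Σ aₙ tⁿ`, real variable. -/
noncomputable def fR (a : ℕ → ℝ) (t : ℝ) : ℝ := ∑' n : ℕ, a n * t ^ n

/-- The power series `f(z) = Σ aₙ zⁿ`, complex variable. -/
noncomputable def fC (a : ℕ → ℝ) (z : ℂ) : ℂ := ∑' n : ℕ, (a n : ℂ) * z ^ n

/-- Mean of the Khinchin family of `f`: `m_f(t) = t f'(t)/f(t)`. -/
noncomputable def mf (a : ℕ → ℝ) (t : ℝ) : ℝ := t * deriv (fR a) t / fR a t

/-- Standard deviation of the Khinchin family of `f`: `σ_f(t) = √(t m_f'(t))`. -/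
noncomputable def sf (a : ℕ → ℝ) (t : ℝ) : ℝ := Real.sqrt (t * deriv (mf a) t)

/-- Characteristic function of the normalized Khinchin variable of `f`. -/
noncomputable def charf (a : ℕ → ℝ) (t θ : ℝ) : ℂ :=
  fC a ((t : ℂ) * Complex.exp (Complex.I * θ / (sf a t : ℂ))) / fC a (t : ℂ) *
    Complex.exp (-(Complex.I * θ * (mf a t : ℂ) / (sf a t : ℂ)))


section Aux

open MeasureTheory Complex intervalIntegral

lemma fC_ofReal (a : ℕ → ℝ) (t : ℝ) : fC a (t : ℂ) = (fR a t : ℂ) := by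
  unfold fC fR
  rw [Complex.ofReal_tsum]
  push_cast
  rfl

lemma fR_pos (a : ℕ → ℝ) {R t : ℝ} (hpos : ∀ n, 0 ≤ a n) (h0 : 0 < a 0)
    (hconv : ∀ t : ℝ, |t| < R → Summable fun n => a n * t ^ n)
    (ht0 : 0 ≤ t) (htR : t < R) : 0 < fR a t := by
  have hs : Summable fun n => a n * t ^ n := hconv t (by rwa [_root_.abs_of_nonneg ht0])
  have := hs.le_tsum 0 (fun n _ => mul_nonneg (hpos n) (pow_nonneg ht0 n))
  simp only [pow_zero, mul_one] at this
  exact lt_of_lt_of_le h0 (by simpa [fR] using this)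

lemma orth (m : ℤ) (hm : m ≠ 0) :
    (∫ θ : ℝ in (-Real.pi)..Real.pi, Complex.exp (m * Complex.I * θ)) = 0 := by
  have hc : (m : ℂ) * Complex.I ≠ 0 := by simp [Complex.ext_iff, hm]
  rw [integral_exp_mul_complex hc]
  have h1 : Complex.exp ((m:ℂ) * Complex.I * ((Real.pi:ℝ):ℂ)) =
      Complex.exp ((m:ℂ) * Complex.I * ((-Real.pi:ℝ):ℂ)) := by
    push_cast
    rw [show ((m:ℂ) * Complex.I * (Real.pi:ℂ))
        = ↑m * I * -↑Real.pi + m * (2*↑Real.pi*I) by ring]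
    rw [Complex.exp_add, Complex.exp_int_mul_two_pi_mul_I, mul_one]
  rw [h1, sub_self, zero_div]

lemma cauchy (a : ℕ → ℝ) {R : ℝ} (hpos : ∀ n, 0 ≤ a n)
    (hconv : ∀ t : ℝ, |t| < R → Summable fun n => a n * t ^ n)
    {t : ℝ} (ht0 : 0 < t) (htR : t < R) (n : ℕ) :
    (∫ θ : ℝ in (-Real.pi)..Real.pi,
        fC a ((t:ℂ) * Complex.exp (Complex.I * θ)) * Complex.exp (-(Complex.I * n * θ)))
      = 2 * Real.pi * a n * t ^ n := by
  have hsum : Summable fun k => a k * t ^ k := hconv t (by rw [_root_.abs_of_pos ht0]; exact htR)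
  set F : ℕ → ℝ → ℂ := fun k θ => (a k : ℂ) * (t:ℂ) ^ k *
      Complex.exp ((((k:ℤ) - (n:ℤ)):ℂ) * Complex.I * θ) with hF
  have habs : ∀ k (θ : ℝ), ‖F k θ‖ = a k * t ^ k := by
    intro k θ
    rw [hF]
    simp only [norm_mul, norm_pow, Complex.norm_exp, Complex.norm_real, Real.norm_eq_abs]
    have : ((((k:ℤ) - (n:ℤ)):ℂ) * Complex.I * θ).re = 0 := by simp
    rw [this, Real.exp_zero, mul_one, _root_.abs_of_nonneg (hpos k), _root_.abs_of_pos ht0]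
  have hint : ∀ θ : ℝ, fC a ((t:ℂ) * Complex.exp (Complex.I * θ)) *
      Complex.exp (-(Complex.I * n * θ)) = ∑' k, F k θ := by
    intro θ
    rw [fC, ← tsum_mul_right]
    refine tsum_congr fun k => ?_
    rw [hF, mul_pow, ← Complex.exp_nat_mul]
    rw [show (a k:ℂ) * ((t:ℂ)^k * Complex.exp (k*(Complex.I*θ))) * Complex.exp (-(Complex.I*n*θ))
        = (a k:ℂ) * (t:ℂ)^k * (Complex.exp (k*(Complex.I*θ)) * Complex.exp (-(Complex.I*n*θ)))
        from by ring, ← Complex.exp_add]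
    congr 1
    push_cast
    ring
  have hFc : ∀ k, Continuous (F k) := by
    intro k
    exact continuous_const.mul (Complex.continuous_exp.comp (by continuity))
  have hFint : ∀ k, IntegrableOn (F k) (Set.Ioc (-Real.pi) Real.pi) := fun k =>
    (hFc k).integrableOn_Ioc
  have hvol : (volume (Set.Ioc (-Real.pi) Real.pi)).toReal = 2 * Real.pi := by
    rw [Real.volume_Ioc, ENNReal.toReal_ofReal (by linarith [Real.pi_pos])]
    ring
  have hnorm_sum : Summable fun k => ∫ θ in Set.Ioc (-Real.pi) Real.pi, ‖F k θ‖ := by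
    have : (fun k => ∫ θ in Set.Ioc (-Real.pi) Real.pi, ‖F k θ‖)
        = fun k => (2 * Real.pi) * (a k * t ^ k) := by
      funext k
      simp only [habs]
      rw [setIntegral_const, smul_eq_mul, measureReal_def, hvol]
    rw [this]
    exact hsum.mul_left _
  calc (∫ θ : ℝ in (-Real.pi)..Real.pi,
        fC a ((t:ℂ) * Complex.exp (Complex.I * θ)) * Complex.exp (-(Complex.I * n * θ)))
      = ∫ θ in Set.Ioc (-Real.pi) Real.pi, ∑' k, F k θ := by
        rw [intervalIntegral.integral_of_le (by linarith [Real.pi_pos])]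
        exact setIntegral_congr_fun measurableSet_Ioc (fun θ _ => hint θ)
    _ = ∑' k, ∫ θ in Set.Ioc (-Real.pi) Real.pi, F k θ :=
        (integral_tsum_of_summable_integral_norm hFint hnorm_sum).symm
    _ = 2 * Real.pi * a n * t ^ n := by
        rw [tsum_eq_single n]
        · have h1 : (∫ θ in Set.Ioc (-Real.pi) Real.pi, F n θ)
              = ((a n : ℂ) * (t:ℂ)^n) * ∫ θ in Set.Ioc (-Real.pi) Real.pi, (1:ℂ) := by
            rw [← MeasureTheory.integral_const_mul]
            refine setIntegral_congr_fun measurableSet_Ioc fun θ _ => ?_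
            rw [hF]
            simp
          rw [h1, setIntegral_const, Complex.real_smul, measureReal_def, hvol, mul_one]
          push_cast
          ring
        · intro k hk
          have h2 : (∫ θ in Set.Ioc (-Real.pi) Real.pi, F k θ)
              = ((a k : ℂ) * (t:ℂ)^k) * ∫ θ : ℝ in (-Real.pi)..Real.pi,
                  Complex.exp ((((k:ℤ) - (n:ℤ)):ℂ) * Complex.I * θ) := by
            rw [intervalIntegral.integral_of_le (by linarith [Real.pi_pos]), ← MeasureTheory.integral_const_mul]
          have horth := orth ((k:ℤ) - (n:ℤ)) (sub_ne_zero.mpr (by exact_mod_cast hk))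
          push_cast at horth h2 ⊢
          rw [h2, horth, mul_zero]

lemma fC_contOn (a : ℕ → ℝ) {R : ℝ} (hpos : ∀ n, 0 ≤ a n)
    (hconv : ∀ t : ℝ, |t| < R → Summable fun n => a n * t ^ n)
    {t : ℝ} (ht0 : 0 ≤ t) (htR : t < R) :
    ContinuousOn (fC a) (Metric.closedBall (0:ℂ) t) := by
  have hsum : Summable fun k => a k * t ^ k :=
    hconv t (by rwa [_root_.abs_of_nonneg ht0])
  apply continuousOn_tsum (u := fun k => a k * t ^ k)
    (fun k => (continuous_const.mul (continuous_pow k)).continuousOn) hsum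
  intro k z hz
  rw [Metric.mem_closedBall, Complex.dist_eq, sub_zero] at hz
  rw [Pi.mul_apply, norm_mul, norm_pow, Complex.norm_real, Real.norm_eq_abs,
    _root_.abs_of_nonneg (hpos k)]
  exact mul_le_mul_of_nonneg_left (pow_le_pow_left₀ (norm_nonneg z) hz k) (hpos k)

lemma path_cont (a : ℕ → ℝ) {R : ℝ} (hpos : ∀ n, 0 ≤ a n)
    (hconv : ∀ t : ℝ, |t| < R → Summable fun n => a n * t ^ n)
    {t : ℝ} (ht0 : 0 ≤ t) (htR : t < R) {g : ℝ → ℂ} (hg : Continuous g)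
    (hgim : ∀ x, (g x).re = 0) :
    Continuous (fun x : ℝ => fC a ((t:ℂ) * Complex.exp (g x))) := by
  have h1 : ∀ x : ℝ, (t:ℂ) * Complex.exp (g x) ∈ Metric.closedBall (0:ℂ) t := by
    intro x
    rw [Metric.mem_closedBall, Complex.dist_eq, sub_zero, norm_mul, Complex.norm_exp,
      hgim, Real.exp_zero, mul_one, Complex.norm_real, Real.norm_eq_abs, _root_.abs_of_nonneg ht0]
  exact (fC_contOn a hpos hconv ht0 htR).comp_continuous
    (continuous_const.mul (Complex.continuous_exp.comp hg)) h1

lemma charf_cont (a : ℕ → ℝ) {R : ℝ} (hpos : ∀ n, 0 ≤ a n)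
    (hconv : ∀ t : ℝ, |t| < R → Summable fun n => a n * t ^ n)
    {t : ℝ} (ht0 : 0 ≤ t) (htR : t < R) :
    Continuous (fun x : ℝ => charf a t x) := by
  unfold charf
  apply Continuous.mul
  · apply Continuous.div_const
    apply path_cont a hpos hconv ht0 htR
    · continuity
    · intro x
      rw [show Complex.I * (x:ℂ) / (sf a t : ℂ) = Complex.I * ((x / sf a t : ℝ):ℂ) by
        push_cast; ring]
      simp
  · apply Complex.continuous_exp.comp
    continuity

lemma subst (a : ℕ → ℝ) {R : ℝ} (hpos : ∀ n, 0 ≤ a n)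
    (hconv : ∀ t : ℝ, |t| < R → Summable fun n => a n * t ^ n)
    {t : ℝ} (ht0 : 0 < t) (htR : t < R) (hσ : 0 < sf a t) (n : ℕ) :
    (∫ x : ℝ in (-(Real.pi * sf a t))..(Real.pi * sf a t),
        charf a t x * Complex.exp (Complex.I * x * (((mf a t - n) / sf a t : ℝ) : ℂ)))
      = ((2 * Real.pi * a n * t ^ n * sf a t / fR a t : ℝ) : ℂ) := by
  set σ := sf a t with hσdef
  have hσ0 : σ ≠ 0 := ne_of_gt hσ
  set g : ℝ → ℂ := fun θ => fC a ((t:ℂ) * Complex.exp (Complex.I * θ)) *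
      Complex.exp (-(Complex.I * n * θ)) / fC a (t:ℂ) with hg
  have key : ∀ x : ℝ, charf a t x * Complex.exp (Complex.I * x * (((mf a t - n) / σ : ℝ) : ℂ))
      = g (x / σ) := by
    intro x
    rw [hg, charf]
    have harg : Complex.I * (x:ℂ) / (σ:ℂ) = Complex.I * (((x / σ : ℝ)):ℂ) := by
      push_cast; ring
    rw [harg]
    rw [div_mul_eq_mul_div, div_mul_eq_mul_div, mul_assoc, ← Complex.exp_add]
    congr 2
    push_cast
    simp only [← hσdef]
    field_simp
    ring
  calc (∫ x : ℝ in (-(Real.pi * σ))..(Real.pi * σ),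
        charf a t x * Complex.exp (Complex.I * x * (((mf a t - n) / σ : ℝ) : ℂ)))
      = ∫ x : ℝ in (-(Real.pi * σ))..(Real.pi * σ), g (x / σ) := by
        refine intervalIntegral.integral_congr fun x _ => key x
    _ = σ • ∫ θ : ℝ in (-(Real.pi * σ)/σ)..((Real.pi * σ)/σ), g θ :=
        intervalIntegral.integral_comp_div g hσ0
    _ = ((2 * Real.pi * a n * t ^ n * σ / fR a t : ℝ) : ℂ) := by
        rw [neg_div, mul_div_assoc, div_self hσ0, mul_one]
        rw [hg]
        simp only [intervalIntegral.integral_div]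
        rw [cauchy a hpos hconv ht0 htR n, fC_ofReal, Complex.real_smul]
        push_cast
        field_simp

lemma alg (A p s2 T F σ S : ℝ) (hF : F ≠ 0) (hσ : σ ≠ 0) (hS : S ≠ 0) (hs2 : s2 ≠ 0)
    (h2 : s2 * s2 = p) :
    A / (F / (s2 * T * S)) = (p * A * T * σ / F) * (σ / S)⁻¹ / s2 := by
  subst h2
  rw [inv_div]
  field_simp

lemma gauss_int : (∫ x : ℝ, Complex.exp (-(x:ℂ)^2/2)) = ((Real.sqrt (2*Real.pi) : ℝ) : ℂ) := by
  have h1 : ∀ x : ℝ, Complex.exp (-(x:ℂ)^2/2) = ((Real.exp (-(1/2) * x^2) : ℝ) : ℂ) := by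
    intro x
    rw [Complex.ofReal_exp]
    congr 1
    push_cast
    ring
  simp_rw [h1]
  calc (∫ x : ℝ, ((Real.exp (-(1/2) * x^2) : ℝ) : ℂ))
      = ((∫ x : ℝ, Real.exp (-(1/2) * x^2) : ℝ) : ℂ) := integral_ofReal
    _ = _ := by rw [integral_gaussian]; norm_num; rw [mul_comm]

lemma G_lim (σn cn : ℕ → ℝ) (hσ : Tendsto σn atTop atTop) (hc : Tendsto cn atTop (𝓝 0)) :
    Tendsto (fun n => ∫ x : ℝ in (-(Real.pi * σn n))..(Real.pi * σn n),
        Complex.exp (-(x:ℂ)^2/2) * Complex.exp (Complex.I * x * ((cn n : ℝ) : ℂ)))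
      atTop (𝓝 ((Real.sqrt (2*Real.pi) : ℝ) : ℂ)) := by
  have hπ := Real.pi_pos
  set g : ℕ → ℝ → ℂ := fun n x =>
    Complex.exp (-(x:ℂ)^2/2) * Complex.exp (Complex.I * x * ((cn n : ℝ) : ℂ)) with hg
  set F : ℕ → ℝ → ℂ := fun n =>
    Set.indicator (Set.Ioc (-(Real.pi * σn n)) (Real.pi * σn n)) (g n) with hFdef
  have hgc : ∀ n, Continuous (g n) := by
    intro n
    exact (Complex.continuous_exp.comp (by continuity)).mul
      (Complex.continuous_exp.comp (by continuity))
  have hgnorm : ∀ n x, ‖g n x‖ = Real.exp (-x^2/2) := by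
    intro n x
    rw [hg]
    simp only
    rw [show (-(x:ℂ)^2/2) = ((-x^2/2 : ℝ):ℂ) by push_cast; ring]
    simp only [norm_mul, Complex.norm_exp, Complex.ofReal_re]
    have h2 : (Complex.I * x * ((cn n : ℝ) : ℂ)).re = 0 := by simp
    rw [h2, Real.exp_zero, mul_one]
  have hbound_int : Integrable (fun x : ℝ => Real.exp (-x^2/2)) := by
    have h := integrable_exp_neg_mul_sq (b := (1:ℝ)/2) (by norm_num)
    convert h using 2 with x
    ring
  have hmain : Tendsto (fun n => ∫ x : ℝ, F n x) atTop
      (𝓝 (∫ x : ℝ, Complex.exp (-(x:ℂ)^2/2))) := by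
    apply tendsto_integral_of_dominated_convergence (fun x => Real.exp (-x^2/2))
    · intro n
      exact ((hgc n).aestronglyMeasurable).indicator measurableSet_Ioc
    · exact hbound_int
    · intro n
      refine Eventually.of_forall fun x => ?_
      by_cases hx : x ∈ Set.Ioc (-(Real.pi * σn n)) (Real.pi * σn n)
      · rw [hFdef]
        simp only [Set.indicator_of_mem hx]
        rw [hgnorm]
      · rw [hFdef]
        simp only [Set.indicator_of_notMem hx, norm_zero]
        positivity
    · refine Eventually.of_forall fun x => ?_
      have h1 : Tendsto (fun n => g n x) atTop (𝓝 (Complex.exp (-(x:ℂ)^2/2))) := by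
        have hc' : Tendsto (fun n => ((cn n : ℝ) : ℂ)) atTop (𝓝 0) := by
          have := (Complex.continuous_ofReal.tendsto 0).comp hc
          simpa [Function.comp_def] using this
        have h2 : Tendsto (fun n => Complex.exp (Complex.I * x * ((cn n : ℝ) : ℂ)))
            atTop (𝓝 1) := by
          have h3 : Tendsto (fun n => Complex.I * x * ((cn n : ℝ) : ℂ)) atTop (𝓝 0) := by
            have := hc'.const_mul (Complex.I * x)
            simpa using this
          have := (Complex.continuous_exp.tendsto 0).comp h3
          simpa [Function.comp_def] using this
        have := (tendsto_const_nhds (x := Complex.exp (-(x:ℂ)^2/2)) (f := atTop)).mul h2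
        simpa using this
      refine h1.congr' ?_
      have hev : ∀ᶠ n in atTop, (|x| + 1) / Real.pi ≤ σn n := hσ.eventually_ge_atTop _
      filter_upwards [hev] with n hn
      have hx : x ∈ Set.Ioc (-(Real.pi * σn n)) (Real.pi * σn n) := by
        have : |x| + 1 ≤ Real.pi * σn n := by
          rw [div_le_iff₀ hπ] at hn
          linarith [hn]
        have habs : |x| < Real.pi * σn n := by linarith [abs_nonneg x]
        rw [abs_lt] at habs
        exact ⟨by linarith [habs.1], le_of_lt habs.2⟩
      rw [hFdef]
      simp only [Set.indicator_of_mem hx]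
  rw [gauss_int] at hmain
  apply hmain.congr'
  have hev : ∀ᶠ n in atTop, (0:ℝ) < σn n := hσ.eventually_gt_atTop 0
  filter_upwards [hev] with n hn
  rw [hFdef]
  simp only
  rw [MeasureTheory.integral_indicator measurableSet_Ioc,
    ← intervalIntegral.integral_of_le (by nlinarith : -(Real.pi * σn n) ≤ Real.pi * σn n)]

end Aux

theorem stmt19 (a : ℕ → ℝ) (R : ℝ) (hR : 0 < R)
    (hpos : ∀ n, 0 ≤ a n) (h0 : 0 < a 0) (hnc : ∃ n, 1 ≤ n ∧ a n ≠ 0)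
    (hconv : ∀ t : ℝ, |t| < R → Summable fun n => a n * t ^ n)
    (hdiv : ∀ t : ℝ, R < t → ¬ Summable fun n => a n * t ^ n)
    (hsigma : Tendsto (sf a) (𝓝[<] R) atTop)
    (hstrong : Tendsto (fun t : ℝ =>
        ∫ θ in (-(Real.pi * sf a t))..(Real.pi * sf a t),
          ‖charf a t θ - Complex.exp (-(θ : ℂ) ^ 2 / 2)‖)
      (𝓝[<] R) (𝓝 0))
    (mt : ℝ → ℝ) (hmtCont : ContinuousOn mt (Set.Ico 0 R))
    (hmtMono : StrictMonoOn mt (Set.Ico 0 R))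
    (hmtTop : Tendsto mt (𝓝[<] R) atTop)
    (happrox : Tendsto (fun t : ℝ => (mf a t - mt t) / sf a t) (𝓝[<] R) (𝓝 0))
    (τ : ℕ → ℝ) (hτ : ∀ᶠ n : ℕ in atTop, τ n ∈ Set.Ioo 0 R ∧ mt (τ n) = n)
    (st : ℝ → ℝ) (hst : Tendsto (fun t : ℝ => sf a t / st t) (𝓝[<] R) (𝓝 1)) :
    Tendsto (fun n : ℕ =>
        a n / (fR a (τ n) / (Real.sqrt (2 * Real.pi) * (τ n) ^ n * st (τ n))))
      atTop (𝓝 1) := by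
  have hπ := Real.pi_pos
  -- τ n → R from the left
  have hlt : ∀ᶠ n : ℕ in atTop, τ n < R := hτ.mono fun n h => h.1.2
  have hgt : ∀ r, r < R → ∀ᶠ n : ℕ in atTop, r < τ n := by
    intro r hr
    have hs0 : (0:ℝ) ≤ max r 0 := le_max_right _ _
    have hsR : max r 0 < R := max_lt hr hR
    have h1 : ∀ᶠ n : ℕ in atTop, mt (max r 0) < (n:ℝ) :=
      tendsto_natCast_atTop_atTop.eventually_gt_atTop (mt (max r 0))
    filter_upwards [h1, hτ] with n h1 h2
    by_contra hle
    push_neg at hle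
    have hτs : τ n ≤ max r 0 := le_trans hle (le_max_left _ _)
    have hmono : mt (τ n) ≤ mt (max r 0) :=
      hmtMono.monotoneOn ⟨le_of_lt h2.1.1, h2.1.2⟩ ⟨hs0, hsR⟩ hτs
    rw [h2.2] at hmono
    linarith
  have hτR : Tendsto τ atTop (𝓝[<] R) := by
    rw [tendsto_nhdsWithin_iff]
    constructor
    · rw [tendsto_order]
      exact ⟨fun r hr => hgt r hr, fun r hr => hlt.mono fun n h => lt_trans h hr⟩
    · exact hlt.mono fun n h => h
  -- composites along τ
  have hsig : Tendsto (fun n => sf a (τ n)) atTop atTop := hsigma.comp hτR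
  have hB : Tendsto (fun n => ∫ θ in (-(Real.pi * sf a (τ n)))..(Real.pi * sf a (τ n)),
      ‖charf a (τ n) θ - Complex.exp (-(θ : ℂ) ^ 2 / 2)‖) atTop (𝓝 0) :=
    hstrong.comp hτR
  have hratio : Tendsto (fun n => sf a (τ n) / st (τ n)) atTop (𝓝 1) := hst.comp hτR
  set c : ℕ → ℝ := fun n => (mf a (τ n) - n) / sf a (τ n) with hcdef
  have hc : Tendsto c atTop (𝓝 0) := by
    apply (happrox.comp hτR).congr'
    filter_upwards [hτ] with n hn
    rw [hcdef]
    simp only [Function.comp_apply, hn.2]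
  have hσpos : ∀ᶠ n : ℕ in atTop, 0 < sf a (τ n) := hsig.eventually_gt_atTop 0
  have hfRpos : ∀ᶠ n : ℕ in atTop, 0 < fR a (τ n) := by
    filter_upwards [hτ] with n hn
    exact fR_pos a hpos h0 hconv (le_of_lt hn.1.1) hn.1.2
  -- the main integrals
  set I : ℕ → ℂ := fun n => ∫ x : ℝ in (-(Real.pi * sf a (τ n)))..(Real.pi * sf a (τ n)),
    charf a (τ n) x * Complex.exp (Complex.I * x * ((c n : ℝ) : ℂ)) with hIdef
  set G : ℕ → ℂ := fun n => ∫ x : ℝ in (-(Real.pi * sf a (τ n)))..(Real.pi * sf a (τ n)),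
    Complex.exp (-(x:ℂ)^2/2) * Complex.exp (Complex.I * x * ((c n : ℝ) : ℂ)) with hGdef
  set r : ℕ → ℝ := fun n =>
    2 * Real.pi * a n * (τ n) ^ n * sf a (τ n) / fR a (τ n) with hrdef
  have hIr : ∀ᶠ n : ℕ in atTop, ((r n : ℝ) : ℂ) = I n := by
    filter_upwards [hτ, hσpos] with n hn hσn
    rw [hIdef, hrdef]
    exact (subst a hpos hconv hn.1.1 hn.1.2 hσn n).symm
  -- difference tends to zero
  have hIG : Tendsto (fun n => I n - G n) atTop (𝓝 0) := by
    apply squeeze_zero_norm' _ hB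
    filter_upwards [hτ, hσpos] with n hn hσn
    set t := τ n
    set σ := sf a t
    have hlin : Continuous (fun x : ℝ => Complex.I * (x:ℂ) * ((c n : ℝ) : ℂ)) :=
      (continuous_const.mul Complex.continuous_ofReal).mul continuous_const
    have hquad : Continuous (fun x : ℝ => -(x:ℂ)^2/2) :=
      ((Complex.continuous_ofReal.pow 2).neg).div_const 2
    have hcont1 : Continuous (fun x : ℝ => charf a t x *
        Complex.exp (Complex.I * x * ((c n : ℝ) : ℂ))) :=
      (charf_cont a hpos hconv (le_of_lt hn.1.1) hn.1.2).mul
        (Complex.continuous_exp.comp hlin)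
    have hcont2 : Continuous (fun x : ℝ => Complex.exp (-(x:ℂ)^2/2) *
        Complex.exp (Complex.I * x * ((c n : ℝ) : ℂ))) :=
      (Complex.continuous_exp.comp hquad).mul
        (Complex.continuous_exp.comp hlin)
    have hle : -(Real.pi * σ) ≤ Real.pi * σ := by nlinarith
    have hsub : I n - G n = ∫ x : ℝ in (-(Real.pi * σ))..(Real.pi * σ),
        (charf a t x * Complex.exp (Complex.I * x * ((c n : ℝ) : ℂ))
          - Complex.exp (-(x:ℂ)^2/2) * Complex.exp (Complex.I * x * ((c n : ℝ) : ℂ))) := by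
      rw [hIdef, hGdef]
      exact (intervalIntegral.integral_sub (hcont1.intervalIntegrable _ _)
        (hcont2.intervalIntegrable _ _)).symm
    rw [hsub]
    refine le_trans (intervalIntegral.norm_integral_le_integral_norm hle) (le_of_eq ?_)
    refine intervalIntegral.integral_congr fun x _ => ?_
    rw [← sub_mul, norm_mul]
    have h2 : ‖Complex.exp (Complex.I * x * ((c n : ℝ) : ℂ))‖ = 1 := by
      rw [Complex.norm_exp]
      have : (Complex.I * x * ((c n : ℝ) : ℂ)).re = 0 := by simp
      rw [this, Real.exp_zero]
    rw [h2, mul_one]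
  -- G tends to √(2π)
  have hG : Tendsto G atTop (𝓝 ((Real.sqrt (2*Real.pi) : ℝ) : ℂ)) :=
    G_lim (fun n => sf a (τ n)) c hsig hc
  -- I tends to √(2π)
  have hI : Tendsto I atTop (𝓝 ((Real.sqrt (2*Real.pi) : ℝ) : ℂ)) := by
    have := hIG.add hG
    rw [zero_add] at this
    apply this.congr
    intro n
    ring
  -- r tends to √(2π)
  have hr : Tendsto r atTop (𝓝 (Real.sqrt (2*Real.pi))) := by
    have hre := (Complex.continuous_re.tendsto _).comp hI
    simp only [Complex.ofReal_re] at hre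
    apply hre.congr'
    filter_upwards [hIr] with n hn
    rw [Function.comp_apply, ← hn, Complex.ofReal_re]
  -- st ≠ 0 eventually
  have hst0 : ∀ᶠ n : ℕ in atTop, st (τ n) ≠ 0 := by
    filter_upwards [hratio.eventually_ne one_ne_zero] with n hn
    intro h
    apply hn
    rw [h, div_zero]
  -- conclude
  have hs2 : Real.sqrt (2*Real.pi) ≠ 0 := by positivity
  have h2π : Real.sqrt (2*Real.pi) * Real.sqrt (2*Real.pi) = 2 * Real.pi :=
    Real.mul_self_sqrt (by positivity)
  have hq : Tendsto (fun n => r n * (sf a (τ n) / st (τ n))⁻¹ / Real.sqrt (2*Real.pi))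
      atTop (𝓝 1) := by
    have h1 := (hr.mul (hratio.inv₀ one_ne_zero)).div_const (Real.sqrt (2*Real.pi))
    rw [inv_one, mul_one, div_self hs2] at h1
    exact h1
  apply hq.congr'
  filter_upwards [hτ, hσpos, hfRpos, hst0] with n hτn hσn hfn hstn
  rw [hrdef]
  exact (alg (a n) (2*Real.pi) (Real.sqrt (2*Real.pi)) ((τ n)^n) (fR a (τ n)) (sf a (τ n))
    (st (τ n)) (ne_of_gt hfn) (ne_of_gt hσn) hstn hs2 h2π).symm
end
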